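/- arXiv:0903.2995 — 3 statements merged into one kernel-verified Lean document; each statement's English description precedes it below -/
import Mathlib

section
/- Optimal bid lemma: let v be an internal node of a finite game tree with nonempty finite set of children S, let m = min_{w∈S} R(w), M = max_{w∈S} R(w), and set b = (M − m)/2. If a real number x satisfies x > R(v), then 0 ≤ b ≤ x, there exists a child w₀ ∈ S with x − b > R(w₀), and every child w ∈ S satisfies x + b > R(w). -/
/-- The two players. -/
inductive Player : Type
  | alice
  | bob

/-- A finite game tree: either a leaf labeled with the player who wins there,
or an internal node with a nonempty finite list of children (the positions
either player may move to), encoded as a head child `first` plus the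
remaining children `rest`. -/
inductive GameTree : Type
  | leaf (winner : Player)
  | node (first : GameTree) (rest : List GameTree)

namespace GameTree

/-- The Richman value: `R (leaf alice) = 0`, `R (leaf bob) = 1`, and at an
internal node it is the average of the minimum and maximum of the Richman
values of the children. -/
noncomputable def R : GameTree → ℝ
  | leaf .alice => 0
  | leaf .bob => 1
  | node c cs =>
      ((cs.attach.map fun w => R w.1).foldr min (R c) +
       (cs.attach.map fun w => R w.1).foldr max (R c)) / 2
decreasing_by
  all_goals simp only [GameTree.node.sizeOf_spec]
  all_goals try omega
  all_goals (have h := List.sizeOf_lt_of_mem w.2; omega)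


private lemma foldr_min_mem' (a : ℝ) (l : List ℝ) : l.foldr min a ∈ a :: l := by
  induction l with
  | nil => simp
  | cons b t ih =>
    simp only [List.foldr_cons]
    rcases min_cases b (t.foldr min a) with ⟨h, _⟩ | ⟨h, _⟩
    · rw [h]; simp
    · rw [h]
      rcases (List.mem_cons).1 ih with h2 | h2
      · exact (List.mem_cons).2 (Or.inl h2)
      · simp [h2]

private lemma le_foldr_max' (a : ℝ) (l : List ℝ) : ∀ b ∈ a :: l, b ≤ l.foldr max a := by
  induction l with
  | nil => simp
  | cons b t ih =>
    intro y hy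
    simp only [List.foldr_cons]
    rcases List.mem_cons.1 hy with h | h
    · subst h; exact le_trans (ih y (by simp)) (le_max_right _ _)
    · rcases List.mem_cons.1 h with h | h
      · subst h; exact le_max_left _ _
      · exact le_trans (ih y (by simp [h])) (le_max_right _ _)

private lemma R_node' (c : GameTree) (cs : List GameTree) :
    R (node c cs) = ((cs.map R).foldr min (R c) + (cs.map R).foldr max (R c)) / 2 := by
  rw [R]; simp

private lemma R_nonneg' : ∀ t : GameTree, 0 ≤ R t
  | leaf .alice => by rw [R]
  | leaf .bob => by rw [R]; norm_num
  | node c cs => by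
      rw [R_node']
      have hmem := foldr_min_mem' (R c) (cs.map R)
      have hm : 0 ≤ (cs.map R).foldr min (R c) := by
        rcases List.mem_cons.1 hmem with h | h
        · rw [h]; exact R_nonneg' c
        · obtain ⟨w, hw, hw2⟩ := List.mem_map.1 h
          rw [← hw2]; exact R_nonneg' w
      have hM : (cs.map R).foldr min (R c) ≤ (cs.map R).foldr max (R c) :=
        le_foldr_max' _ _ _ hmem
      linarith
decreasing_by
  all_goals simp only [GameTree.node.sizeOf_spec]
  all_goals try omega
  all_goals (have h := List.sizeOf_lt_of_mem hw; omega)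

/-- **Optimal bid lemma.** Let `node c cs` be an internal node with children
`c :: cs`, let `m` and `M` be the minimum and maximum Richman values of the
children, and set `b = (M - m)/2`.  If `x > R (node c cs)`, then `0 ≤ b ≤ x`,
there is a child `w₀` with `x - b > R w₀`, and every child `w` satisfies
`x + b > R w`. -/
theorem optimal_bid (c : GameTree) (cs : List GameTree) (x : ℝ)
    (hx : x > R (node c cs)) :
    0 ≤ ((cs.map R).foldr max (R c) - (cs.map R).foldr min (R c)) / 2 ∧
    ((cs.map R).foldr max (R c) - (cs.map R).foldr min (R c)) / 2 ≤ x ∧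
    (∃ w₀ ∈ c :: cs,
      x - ((cs.map R).foldr max (R c) - (cs.map R).foldr min (R c)) / 2 > R w₀) ∧
    (∀ w ∈ c :: cs,
      x + ((cs.map R).foldr max (R c) - (cs.map R).foldr min (R c)) / 2 > R w) := by
  rw [R_node'] at hx
  set m := (cs.map R).foldr min (R c) with hmdef
  set M := (cs.map R).foldr max (R c) with hMdef
  have hmem := foldr_min_mem' (R c) (cs.map R)
  have hm0 : 0 ≤ m := by
    rcases List.mem_cons.1 hmem with h | h
    · rw [hmdef, h]; exact R_nonneg' c
    · obtain ⟨w, hw, hw2⟩ := List.mem_map.1 h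
      rw [hmdef, ← hw2]; exact R_nonneg' w
  have hmM : m ≤ M := le_foldr_max' _ _ _ hmem
  refine ⟨by linarith, by linarith, ?_, ?_⟩
  · rcases List.mem_cons.1 hmem with h | h
    · exact ⟨c, by simp, by rw [← hmdef] at h; rw [← h]; linarith⟩
    · obtain ⟨w, hw, hw2⟩ := List.mem_map.1 h
      exact ⟨w, by simp [hw], by rw [← hmdef] at hw2; rw [hw2]; linarith⟩
  · intro w hw
    have hle : R w ≤ M := by
      apply le_foldr_max'
      rcases List.mem_cons.1 hw with h | h
      · simp [h]
      · exact List.mem_cons.2 (Or.inr (List.mem_map.2 ⟨w, h, rfl⟩))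
    linarith

end GameTree
end

section
/- Exclusivity of bidding wins: for every finite game tree G and every real number x, the predicates A(G, x) and B(G, x) do not both hold. -/
namespace GameTree

/-- Alice's winning predicate for the continuous bidding game with ties
resolved against Alice.  `A G x` (where `x` is Alice's share of the chips,
normalized so the shares sum to `1`) holds at a leaf iff Alice wins there,
and at an internal node iff there is a bid `b` with `0 ≤ b ≤ x` such that
Alice wins some child with share `x - b` (she wins the bid and moves there)
and Alice wins every child with share `x + b` (Bob wins the bid, pays at
least `b`, and moves anywhere). -/
inductive A : GameTree → ℝ → Prop
  | leaf (x : ℝ) : A (leaf .alice) x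
  | node (c : GameTree) (cs : List GameTree) (x b : ℝ)
      (hb0 : 0 ≤ b) (hbx : b ≤ x)
      (w : GameTree) (hw : w ∈ c :: cs) (hwin : A w (x - b))
      (hlose : ∀ u ∈ c :: cs, A u (x + b)) :
      A (node c cs) x

/-- Bob's winning predicate for the continuous bidding game with ties
resolved against Bob.  `B G x` (where `x` is Alice's share of the chips)
holds at a leaf iff Bob wins there, and at an internal node iff there is a
bid `b` with `0 ≤ b ≤ 1 - x` such that Bob wins some child when Alice's
share is `x + b` (he wins the bid, pays `b` to Alice, and moves there) and
Bob wins every child when Alice's share is `x - b` (Alice wins the bid,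
pays at least `b`, and moves anywhere). -/
inductive B : GameTree → ℝ → Prop
  | leaf (x : ℝ) : B (leaf .bob) x
  | node (c : GameTree) (cs : List GameTree) (x b : ℝ)
      (hb0 : 0 ≤ b) (hbx : b ≤ 1 - x)
      (w : GameTree) (hw : w ∈ c :: cs) (hwin : B w (x + b))
      (hlose : ∀ u ∈ c :: cs, B u (x - b)) :
      B (node c cs) x

theorem aux_exclusive : ∀ {G : GameTree} {x : ℝ}, A G x →
    ∀ {y : ℝ}, y ≤ x → B G y → False := by
  intro G x hA
  induction hA with
  | leaf x => intro y _ hB; cases hB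
  | node c cs x b hb0 hbx w hw hwin hlose ihwin ihlose =>
    intro y hyx hB
    cases hB with
    | node _ _ _ b' hb0' hbx' w' hw' hwin' hlose' =>
      rcases le_or_gt b' b with h | h
      · exact ihlose w' hw' (by linarith) hwin'
      · exact ihwin (by linarith) (hlose' w hw)

/-- **Exclusivity of bidding wins.** For every finite game tree `G` and every
real `x`, Alice and Bob cannot both win the continuous bidding game. -/
theorem bidding_win_exclusive (G : GameTree) (x : ℝ) : ¬(A G x ∧ B G x) := by
  rintro ⟨hA, hB⟩
  exact aux_exclusive hA le_rfl hB

end GameTree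
end

section
/- Optimal-move correspondence: let v be an internal node of a finite game tree with nonempty finite set of children S. A child w ∈ S satisfies R(w) = min_{u∈S} R(u) if and only if it satisfies P(w) = max_{u∈S} P(u); that is, a move is optimal for Alice in the continuous bidding game if and only if it is optimal for her in the random-turn game. -/
namespace GameTree

/-- The random-turn value (probability that Alice wins under optimal play when
a fair coin decides who moves): `P (leaf alice) = 1`, `P (leaf bob) = 0`, and
at an internal node it is the average of the maximum and minimum of the values
of the children. -/
noncomputable def P : GameTree → ℝ
  | leaf .alice => 1
  | leaf .bob => 0
  | node c cs =>
      ((cs.attach.map fun w => P w.1).foldr max (P c) +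
       (cs.attach.map fun w => P w.1).foldr min (P c)) / 2
decreasing_by
  all_goals simp only [GameTree.node.sizeOf_spec]
  all_goals try omega
  all_goals (have h := List.sizeOf_lt_of_mem w.2; omega)

lemma max_one_sub (a b : ℝ) : max (1 - a) (1 - b) = 1 - min a b := by
  rcases le_total a b with h | h
  · rw [min_eq_left h, max_eq_left (by linarith)]
  · rw [min_eq_right h, max_eq_right (by linarith)]

lemma min_one_sub (a b : ℝ) : min (1 - a) (1 - b) = 1 - max a b := by
  rcases le_total a b with h | h
  · rw [max_eq_right h, min_eq_right (by linarith)]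
  · rw [max_eq_left h, min_eq_left (by linarith)]

lemma foldr_max_one_sub (l : List ℝ) (a : ℝ) :
    (l.map (fun x => 1 - x)).foldr max (1 - a) = 1 - l.foldr min a := by
  induction l with
  | nil => simp
  | cons x xs ih => simp [ih, max_one_sub]

lemma foldr_min_one_sub (l : List ℝ) (a : ℝ) :
    (l.map (fun x => 1 - x)).foldr min (1 - a) = 1 - l.foldr max a := by
  induction l with
  | nil => simp
  | cons x xs ih => simp [ih, min_one_sub]

theorem P_eq_one_sub_R : ∀ t : GameTree, P t = 1 - R t
  | leaf .alice => by simp [P, R]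
  | leaf .bob => by simp [P, R]
  | node c cs => by
    have ih : ∀ u ∈ c :: cs, P u = 1 - R u := fun u _ => P_eq_one_sub_R u
    rw [P, R]
    have h1 : (cs.attach.map fun w => P w.1) = (cs.map R).map (fun x => 1 - x) := by
      have e : (cs.attach.map fun w => P w.1) = cs.attach.map (fun w => 1 - R w.1) :=
        List.map_congr_left fun u _ => ih u.1 (List.mem_cons_of_mem _ u.2)
      rw [e, List.map_map,
        show ((fun w : {x // x ∈ cs} => 1 - R w.1)) = (fun x => 1 - x) ∘ R ∘ Subtype.val from rfl,
        ← Function.comp_assoc, ← List.map_map, ← List.map_map, List.attach_map_subtype_val, List.map_map]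
    have h2 : (cs.attach.map fun w => R w.1) = cs.map R := by
      rw [show (fun w : {x // x ∈ cs} => R w.1) = R ∘ Subtype.val from rfl,
        ← List.map_map, List.attach_map_subtype_val]
    rw [h1, h2, ih c List.mem_cons_self, foldr_max_one_sub, foldr_min_one_sub]
    ring
decreasing_by
  simp only [GameTree.node.sizeOf_spec]
  cases List.mem_cons.mp ‹u ∈ c :: cs› with
  | inl h => subst h; omega
  | inr h => have := List.sizeOf_lt_of_mem h; omega

/-- **Optimal-move correspondence.** Let `node c cs` be an internal node with
children `c :: cs`.  A child `w` has minimal Richman value among the children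
if and only if it has maximal random-turn value among the children; that is,
a move is optimal for Alice in the continuous bidding game iff it is optimal
for her in the random-turn game. -/
theorem optimal_move_correspondence (c : GameTree) (cs : List GameTree)
    (w : GameTree) (hw : w ∈ c :: cs) :
    R w = (cs.map R).foldr min (R c) ↔ P w = (cs.map P).foldr max (P c) := by
  have key : (cs.map P).foldr max (P c) = 1 - (cs.map R).foldr min (R c) := by
    have h1 : cs.map P = (cs.map R).map (fun x => 1 - x) := by
      rw [List.map_map]; exact List.map_congr_left fun u _ => P_eq_one_sub_R u
    rw [h1, P_eq_one_sub_R c, foldr_max_one_sub]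
  rw [key, P_eq_one_sub_R w]
  constructor <;> intro h <;> linarith

end GameTree
end
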